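/- (Corollary 2, fixed negative support vector.) Fix an index j and a point s₀ ∈ E with U_j(s₀) < 0, and assume x⁺ i ≠ x⁻ j for every i. Define r_u = min over i of ρ̄(s₀, x⁺ i, x⁻ j), where ρ̄(s₀, x⁺ i, x⁻ j) = (β_j − ‖s₀ − x⁻ j‖² + ‖s₀ − x⁺ i‖²) / (2 * ‖x⁻ j − x⁺ i‖). Then every point in the open Euclidean ball of radius r_u around s₀ is free: for all x ∈ E with ‖x − s₀‖ < r_u, F(x) < 0. -/

import Mathlib

open scoped BigOperators

/-- Corollary 2 (fixed negative support vector): every point of the open ball of radius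
`r_u = min_i ρ̄(s₀, x⁺ i, x⁻ j)` around a point `s₀` with `U_j(s₀) < 0` is free. -/
theorem ball_free_ru
    (d Mp Mm : ℕ) (hd : 0 < d) (hMp : 0 < Mp) (hMm : 0 < Mm)
    (η γ : ℝ) (hη : 0 < η) (hγ : 0 < γ)
    (xp : Fin Mp → EuclideanSpace ℝ (Fin d)) (αp : Fin Mp → ℝ) (hαp : ∀ i, 0 < αp i)
    (xm : Fin Mm → EuclideanSpace ℝ (Fin d)) (αm : Fin Mm → ℝ) (hαm : ∀ j, 0 < αm j)
    (k : EuclideanSpace ℝ (Fin d) → EuclideanSpace ℝ (Fin d) → ℝ)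
    (hk : ∀ x y, k x y = η * Real.exp (-γ * ‖x - y‖ ^ 2))
    (F : EuclideanSpace ℝ (Fin d) → ℝ)
    (hF : ∀ x, F x = (∑ i, αp i * k (xp i) x) - (∑ j, αm j * k (xm j) x))
    (j : Fin Mm)
    (U : EuclideanSpace ℝ (Fin d) → ℝ)
    (hU : ∀ x, U x =
      η * Real.exp (-γ * ⨅ i, ‖x - xp i‖ ^ 2) * (∑ i, αp i) - αm j * k x (xm j))
    (β : ℝ)
    (hβ : β = (1 / γ) * (Real.log (αm j) - Real.log (∑ i, αp i)))
    (s₀ : EuclideanSpace ℝ (Fin d))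
    (hU0 : U s₀ < 0)
    (hne : ∀ i, xp i ≠ xm j)
    (ru : ℝ)
    (hru : ru = ⨅ i, (β - ‖s₀ - xm j‖ ^ 2 + ‖s₀ - xp i‖ ^ 2) / (2 * ‖xm j - xp i‖)) :
    ∀ x : EuclideanSpace ℝ (Fin d), ‖x - s₀‖ < ru → F x < 0 := by
  intro x hx
  have hNp : Nonempty (Fin Mp) := ⟨⟨0, hMp⟩⟩
  set S : ℝ := ∑ i, αp i with hSdef
  have hS : 0 < S := Finset.sum_pos (fun i _ => hαp i) ⟨⟨0, hMp⟩, Finset.mem_univ _⟩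
  have hkey : ∀ c dd A B : ℝ, 0 < c → 0 < dd →
      (c * Real.exp A < dd * Real.exp B ↔ Real.log c + A < Real.log dd + B) := by
    intro c dd A B hc hdd
    rw [show c * Real.exp A = Real.exp (Real.log c + A) by
          rw [Real.exp_add, Real.exp_log hc],
        show dd * Real.exp B = Real.exp (Real.log dd + B) by
          rw [Real.exp_add, Real.exp_log hdd],
        Real.exp_lt_exp]
  have hγβ : Real.log (αm j) - Real.log S = γ * β := by
    rw [hβ]; field_simp
  have hbd : BddBelow (Set.range fun i => ‖s₀ - xp i‖ ^ 2) :=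
    (Set.finite_range _).bddBelow
  have hm_le : ∀ i, (⨅ i, ‖s₀ - xp i‖ ^ 2) ≤ ‖s₀ - xp i‖ ^ 2 := fun i => ciInf_le hbd i
  have hUs : η * Real.exp (-γ * ⨅ i, ‖s₀ - xp i‖ ^ 2) * S
      < αm j * (η * Real.exp (-γ * ‖s₀ - xm j‖ ^ 2)) := by
    have h := hU0
    rw [hU s₀, hk s₀ (xm j)] at h
    linarith
  have hA : ∀ i, ‖s₀ - xm j‖ ^ 2 - ‖s₀ - xp i‖ ^ 2 < β := by
    intro i
    have h1 : (η * S) * Real.exp (-γ * ⨅ i, ‖s₀ - xp i‖ ^ 2)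
        < (αm j * η) * Real.exp (-γ * ‖s₀ - xm j‖ ^ 2) := by
      have e1 : (η * S) * Real.exp (-γ * ⨅ i, ‖s₀ - xp i‖ ^ 2)
          = η * Real.exp (-γ * ⨅ i, ‖s₀ - xp i‖ ^ 2) * S := by ring
      have e2 : (αm j * η) * Real.exp (-γ * ‖s₀ - xm j‖ ^ 2)
          = αm j * (η * Real.exp (-γ * ‖s₀ - xm j‖ ^ 2)) := by ring
      rw [e1, e2]; exact hUs
    rw [hkey _ _ _ _ (mul_pos hη hS) (mul_pos (hαm j) hη)] at h1
    rw [Real.log_mul (ne_of_gt hη) (ne_of_gt hS),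
        Real.log_mul (ne_of_gt (hαm j)) (ne_of_gt hη)] at h1
    have h2 : γ * (‖s₀ - xm j‖ ^ 2 - (⨅ i, ‖s₀ - xp i‖ ^ 2)) < γ * β := by
      nlinarith [h1, hγβ]
    have h3 := (mul_lt_mul_iff_right₀ hγ).mp h2
    linarith [hm_le i]
  have hnorm : ∀ i, 0 < ‖xm j - xp i‖ := fun i =>
    norm_pos_iff.mpr (sub_ne_zero.mpr (Ne.symm (hne i)))
  have hrule : ∀ i, ru ≤ (β - ‖s₀ - xm j‖ ^ 2 + ‖s₀ - xp i‖ ^ 2) / (2 * ‖xm j - xp i‖) := by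
    intro i
    rw [hru]
    exact ciInf_le ((Set.finite_range _).bddBelow) i
  have hgx : ∀ i, ‖x - xm j‖ ^ 2 - ‖x - xp i‖ ^ 2 < β := by
    intro i
    have hx' : ‖x - s₀‖ < (β - ‖s₀ - xm j‖ ^ 2 + ‖s₀ - xp i‖ ^ 2) / (2 * ‖xm j - xp i‖) :=
      lt_of_lt_of_le hx (hrule i)
    have hden : (0:ℝ) < 2 * ‖xm j - xp i‖ := by have := hnorm i; linarith
    have h2 : 2 * ‖xm j - xp i‖ * ‖x - s₀‖ < β - ‖s₀ - xm j‖ ^ 2 + ‖s₀ - xp i‖ ^ 2 := by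
      have h := (mul_lt_mul_iff_right₀ hden).mpr hx'
      rwa [mul_div_cancel₀ _ (ne_of_gt hden)] at h
    have hid : ‖x - xm j‖ ^ 2 - ‖x - xp i‖ ^ 2
        = ‖s₀ - xm j‖ ^ 2 - ‖s₀ - xp i‖ ^ 2
          + 2 * inner ℝ (x - s₀) (xp i - xm j) := by
      simp only [norm_sub_sq_real, inner_sub_left, inner_sub_right]
      ring
    have hcs : (inner ℝ (x - s₀) (xp i - xm j) : ℝ) ≤ ‖x - s₀‖ * ‖xp i - xm j‖ :=
      real_inner_le_norm _ _
    rw [norm_sub_rev (xp i) (xm j)] at hcs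
    nlinarith [hid, hcs, h2]
  have hterm : ∀ i, αp i * k (xp i) x < (αp i / S) * (αm j * k (xm j) x) := by
    intro i
    rw [hk, hk]
    have h1 : S * Real.exp (-γ * ‖xp i - x‖ ^ 2)
        < αm j * Real.exp (-γ * ‖xm j - x‖ ^ 2) := by
      rw [hkey _ _ _ _ hS (hαm j), norm_sub_rev (xp i) x, norm_sub_rev (xm j) x]
      have h := (mul_lt_mul_iff_right₀ hγ).mpr (hgx i)
      nlinarith [h, hγβ]
    have hpos : (0:ℝ) < αp i * η / S := div_pos (mul_pos (hαp i) hη) hS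
    have h2 := mul_lt_mul_of_pos_left h1 hpos
    have e1 : αp i * η / S * (S * Real.exp (-γ * ‖xp i - x‖ ^ 2))
        = αp i * (η * Real.exp (-γ * ‖xp i - x‖ ^ 2)) := by
      field_simp
    have e2 : αp i * η / S * (αm j * Real.exp (-γ * ‖xm j - x‖ ^ 2))
        = αp i / S * (αm j * (η * Real.exp (-γ * ‖xm j - x‖ ^ 2))) := by
      ring
    rw [e1, e2] at h2
    exact h2
  have hsum : (∑ i, αp i * k (xp i) x) < αm j * k (xm j) x := by
    calc (∑ i, αp i * k (xp i) x)
        < ∑ i, (αp i / S) * (αm j * k (xm j) x) :=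
          Finset.sum_lt_sum_of_nonempty ⟨⟨0, hMp⟩, Finset.mem_univ _⟩
            (fun i _ => hterm i)
      _ = (∑ i, αp i / S) * (αm j * k (xm j) x) := by rw [← Finset.sum_mul]
      _ = αm j * k (xm j) x := by
          rw [← Finset.sum_div, ← hSdef, div_self (ne_of_gt hS), one_mul]
  have hneg : αm j * k (xm j) x ≤ ∑ j', αm j' * k (xm j') x :=
    Finset.single_le_sum (f := fun j' => αm j' * k (xm j') x)
      (fun j' _ => by
        rw [hk]
        exact mul_nonneg (hαm j').le (mul_nonneg hη.le (Real.exp_pos _).le))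
      (Finset.mem_univ j)
  rw [hF]
  linarith
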